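/- The unique solution on (0,1] of the ODE v - b(v) - v·b'(v) - v²/(1+v) = 0 with boundary condition lim_{v→0+} b(v) = 0 is b(v) = 1 - ln(1+v)/v. -/

import Mathlib

open Real

theorem ODE_unique_solution (b b' : ℝ → ℝ)
    (hode : ∀ v ∈ Set.Ioc (0 : ℝ) 1,
      HasDerivAt b (b' v) v ∧ v - b v - v * b' v - v ^ 2 / (1 + v) = 0)
    (hbc : Filter.Tendsto b (nhdsWithin 0 (Set.Ioi 0)) (nhds 0)) :
    ∀ v ∈ Set.Ioc (0 : ℝ) 1, b v = 1 - Real.log (1 + v) / v := by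
  set g : ℝ → ℝ := fun v => v * b v - v + Real.log (1 + v) with hg
  -- g has derivative 0 on (0,1]
  have hgderiv : ∀ v ∈ Set.Ioc (0 : ℝ) 1, HasDerivAt g 0 v := by
    intro v hv
    obtain ⟨hb, heq⟩ := hode v hv
    have hv0 : (0:ℝ) < v := hv.1
    have h1v : (0:ℝ) < 1 + v := by linarith
    have hd : HasDerivAt g ((1 * b v + v * b' v) - 1 + (1 + 1/(1+v) * 0) / (1+v)) v := by
      have hlog : HasDerivAt (fun x : ℝ => Real.log (1 + x)) ((1 + 1/(1+v) * 0) / (1+v)) v := by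
        have : HasDerivAt (fun x : ℝ => (1:ℝ) + x) 1 v := by
          simpa using (hasDerivAt_id v).const_add 1
        simpa using (this.log (ne_of_gt h1v))
      exact (((hasDerivAt_id v).mul hb).sub (hasDerivAt_id v)).add hlog
    have key : b v + v * b' v = v / (1 + v) := by
      have : v - b v - v * b' v = v ^ 2 / (1 + v) := by linarith
      field_simp at this ⊢
      ring_nf at this ⊢
      linarith
    convert hd using 1
    rw [mul_zero, add_zero, one_mul, key]
    field_simp
    ring
  -- g is constant on (0,1]
  have hconst : ∀ u ∈ Set.Ioc (0:ℝ) 1, ∀ v ∈ Set.Ioc (0:ℝ) 1, u ≤ v → g v = g u := by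
    intro u hu v hv huv
    have hsub : Set.Icc u v ⊆ Set.Ioc 0 1 := fun x hx =>
      ⟨lt_of_lt_of_le hu.1 hx.1, le_trans hx.2 hv.2⟩
    exact constant_of_has_deriv_right_zero
      (fun x hx => ((hgderiv x (hsub hx)).continuousAt.continuousWithinAt))
      (fun x hx => ((hgderiv x (hsub (Set.mem_Icc_of_Ico hx))).hasDerivWithinAt)) v
      ⟨huv, le_refl v⟩
  intro v hv
  -- g tends to 0 at 0+
  have hlim0 : Filter.Tendsto g (nhdsWithin 0 (Set.Ioi 0)) (nhds 0) := by
    have h1 : Filter.Tendsto (fun x : ℝ => x * b x) (nhdsWithin 0 (Set.Ioi 0)) (nhds 0) := by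
      have hid : Filter.Tendsto (fun x : ℝ => x) (nhdsWithin (0:ℝ) (Set.Ioi 0)) (nhds 0) :=
        Filter.Tendsto.mono_left (by exact continuous_id.tendsto (0:ℝ)) nhdsWithin_le_nhds
      simpa using hid.mul hbc
    have h2 : Filter.Tendsto (fun x : ℝ => -x + Real.log (1 + x)) (nhdsWithin 0 (Set.Ioi 0)) (nhds 0) := by
      have hc : Continuous (fun x : ℝ => -x) := by continuity
      have hl : ContinuousAt (fun x : ℝ => Real.log (1 + x)) 0 :=
        (continuousAt_const.add continuousAt_id).log (by norm_num)
      have := (hc.continuousAt (x := (0:ℝ))).add hl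
      have := this.continuousWithinAt (s := Set.Ioi 0)
      simpa [Pi.add_def] using this.tendsto
    have := h1.add h2
    simpa [hg, sub_eq_add_neg, add_comm, add_left_comm, add_assoc] using this
  -- g is eventually equal to g v near 0+
  have heq : ∀ᶠ x in nhdsWithin (0:ℝ) (Set.Ioi 0), g x = g v := by
    have hmem : Set.Iio v ∈ nhdsWithin (0:ℝ) (Set.Ioi 0) :=
      nhdsWithin_le_nhds (Iio_mem_nhds hv.1)
    filter_upwards [hmem, self_mem_nhdsWithin] with x hx1 hx2
    exact (hconst x ⟨hx2, le_trans (le_of_lt hx1) hv.2⟩ v hv (le_of_lt hx1)).symm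
  have hlimv : Filter.Tendsto g (nhdsWithin 0 (Set.Ioi 0)) (nhds (g v)) :=
    Filter.Tendsto.congr' (heq.mono fun x h => h.symm) tendsto_const_nhds
  have hgv : g v = 0 := tendsto_nhds_unique hlimv hlim0
  have hv0 : (0:ℝ) < v := hv.1
  have : v * b v = v - Real.log (1 + v) := by
    simp only [hg] at hgv; linarith
  field_simp
  linarith
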